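/- Let D be a division algebra with involution *. Then there exists a maximal (self-centralizing) subfield K of D with K* ⊆ K. -/
import Mathlib


/-- An involution on a ring: an additive, anti-multiplicative map of order at most 2. -/
def IsInvolution {R : Type*} [Ring R] (τ : R → R) : Prop :=
  (∀ a b : R, τ (a + b) = τ a + τ b) ∧ (∀ a b : R, τ (a * b) = τ b * τ a) ∧
    (∀ a : R, τ (τ a) = a)

section Aux

variable {D : Type*} [DivisionRing D]

/-- The centralizer of a set in a division ring, as a subfield (division subring). -/
def Subfield.scentralizer (s : Set D) : Subfield D where
  toSubring := Subring.centralizer s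
  inv_mem' := by
    intro x hx m hm
    rcases eq_or_ne x 0 with h | h
    · simp [h]
    · have h1 : m * x = x * m := hx m hm
      calc m * x⁻¹ = x⁻¹ * (x * m) * x⁻¹ := by
            rw [← mul_assoc, inv_mul_cancel₀ h, one_mul]
        _ = x⁻¹ * (m * x) * x⁻¹ := by rw [h1]
        _ = x⁻¹ * m := by rw [mul_assoc, mul_assoc, mul_inv_cancel₀ h, mul_one]

theorem Subfield.mem_scentralizer_iff {s : Set D} {z : D} :
    z ∈ Subfield.scentralizer s ↔ ∀ g ∈ s, g * z = z * g := Iff.rfl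

/-- The subfield closure of a pairwise commuting set is commutative. -/
theorem Subfield.closure_comm {s : Set D} (h : ∀ a ∈ s, ∀ b ∈ s, a * b = b * a) :
    ∀ x ∈ Subfield.closure s, ∀ y ∈ Subfield.closure s, x * y = y * x := by
  have h1 : Subfield.closure s ≤ Subfield.scentralizer s :=
    Subfield.closure_le.2 fun a ha => Subfield.mem_scentralizer_iff.2 fun b hb => h b hb a ha
  have h2 : Subfield.closure s ≤ Subfield.scentralizer (Subfield.closure s) :=
    Subfield.closure_le.2 fun a ha =>
      Subfield.mem_scentralizer_iff.2 fun b hb => (h1 hb a ha).symm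
  intro x hx y hy
  exact h2 hy x hx

end Aux

/-- Every finite-dimensional central division algebra with involution contains a
maximal (i.e. self-centralizing) subfield which is invariant under the involution. -/
theorem stmt_11 {F D : Type*} [Field F] [DivisionRing D] [Algebra F D]
    [Algebra.IsCentral F D] [FiniteDimensional F D]
    (σ : D → D) (hσ : IsInvolution σ) :
    ∃ K : Subfield D, (∀ x ∈ K, σ x ∈ K) ∧
      Set.centralizer (K : Set D) = (K : Set D) := by
  obtain ⟨hadd, hmul, hinv⟩ := hσ
  -- basic facts about σ
  have h0 : σ 0 = 0 := by
    have h := hadd 0 0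
    rw [add_zero] at h
    exact (left_eq_add.mp h)
  have h1 : σ 1 = 1 := by
    have hid : σ 1 * σ 1 = 1 * σ 1 := by rw [← hmul 1 1, one_mul, one_mul]
    rcases eq_or_ne (σ 1) 0 with h | h
    · exfalso
      have : (1 : D) = 0 := by rw [← hinv 1, h, h0]
      exact one_ne_zero this
    · exact mul_right_cancel₀ h hid
  have hneg : ∀ a : D, σ (-a) = -σ a := by
    intro a
    have h := hadd a (-a)
    rw [add_neg_cancel, h0] at h
    exact eq_neg_of_add_eq_zero_right h.symm
  have hinvm : ∀ a : D, σ a⁻¹ = (σ a)⁻¹ := by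
    intro a
    rcases eq_or_ne a 0 with h | h
    · rw [h, inv_zero, h0, inv_zero]
    · have : σ a * σ a⁻¹ = 1 := by rw [← hmul, inv_mul_cancel₀ h, h1]
      exact (inv_eq_of_mul_eq_one_right this).symm
  -- the family of σ-invariant commutative subfields containing the scalars
  set S : Set (Subfield D) :=
    {K | (∀ x ∈ K, σ x ∈ K) ∧ (∀ a ∈ K, ∀ b ∈ K, a * b = b * a) ∧
      ∀ r : F, algebraMap F D r ∈ K} with hS
  -- the center belongs to S
  have hK0 : Subfield.scentralizer (Set.univ : Set D) ∈ S := by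
    refine ⟨?_, ?_, ?_⟩
    · intro x hx
      intro m _
      calc m * σ x = σ (σ m) * σ x := by rw [hinv]
        _ = σ (x * σ m) := (hmul x (σ m)).symm
        _ = σ (σ m * x) := by rw [hx (σ m) (Set.mem_univ _)]
        _ = σ x * σ (σ m) := hmul (σ m) x
        _ = σ x * m := by rw [hinv]
    · intro a ha b hb
      exact (ha b (Set.mem_univ _)).symm
    · intro r m _
      exact (Algebra.commutes r m).symm
  -- the rank function
  classical
  let f : Subfield D → ℕ := fun K => Module.finrank F (Submodule.span F (K : Set D))
  have hbdd : BddAbove (f '' S) := by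
    refine ⟨Module.finrank F D, ?_⟩
    rintro n ⟨K, _, rfl⟩
    exact Submodule.finrank_le _
  have hne : (f '' S).Nonempty := ⟨_, _, hK0, rfl⟩
  obtain ⟨K, hKS, hKval⟩ := Nat.sSup_mem hne hbdd
  have hKmax : ∀ K' ∈ S, f K' ≤ f K := by
    intro K' hK'
    rw [hKval]
    exact le_csSup hbdd ⟨K', hK', rfl⟩
  -- members of S are F-submodules; their spans are themselves
  have hspan : ∀ K' ∈ S, (Submodule.span F ((K' : Subfield D) : Set D) : Set D) = (K' : Set D) := by
    intro K' hK'
    let M : Submodule F D :=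
      { carrier := (K' : Set D)
        add_mem' := fun ha hb => add_mem ha hb
        zero_mem' := zero_mem _
        smul_mem' := by
          intro c x hx
          rw [Algebra.smul_def]
          exact mul_mem (hK'.2.2 c) hx }
    have : Submodule.span F ((K' : Subfield D) : Set D) = M := Submodule.span_eq M
    rw [this]
    rfl
  -- maximality of K
  have hmax2 : ∀ K' ∈ S, K ≤ K' → (K' : Set D) ⊆ (K : Set D) := by
    intro K' hK' hle
    have hMle : Submodule.span F ((K : Subfield D) : Set D) ≤
        Submodule.span F ((K' : Subfield D) : Set D) := Submodule.span_mono hle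
    have heq := Submodule.eq_of_le_of_finrank_le hMle (hKmax K' hK')
    intro x hx
    have : x ∈ (Submodule.span F ((K' : Subfield D) : Set D) : Set D) := by
      rw [hspan K' hK']; exact hx
    rw [← heq] at this
    rw [hspan K hKS] at this
    exact this
  obtain ⟨hKσ, hKcomm, hKalg⟩ := hKS
  -- the centralizer of K
  set C : Set D := Set.centralizer (K : Set D) with hC
  have hCσ : ∀ x ∈ C, σ x ∈ C := by
    intro x hx k hk
    have hσk : σ k ∈ K := hKσ k hk
    calc k * σ x = σ (σ k) * σ x := by rw [hinv]
      _ = σ (x * σ k) := (hmul x (σ k)).symm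
      _ = σ (σ k * x) := by rw [hx (σ k) hσk]
      _ = σ x * σ (σ k) := hmul (σ k) x
      _ = σ x * k := by rw [hinv]
  -- Step 1: σ-fixed elements of C lie in K
  have step1 : ∀ t ∈ C, σ t = t → t ∈ K := by
    intro t ht hσt
    set s : Set D := (K : Set D) ∪ {t} with hs
    have hcomm : ∀ a ∈ s, ∀ b ∈ s, a * b = b * a := by
      rintro a (ha | ha) b (hb | hb)
      · exact hKcomm a ha b hb
      · rw [Set.mem_singleton_iff] at hb; subst hb; exact ht a ha
      · rw [Set.mem_singleton_iff] at ha; subst ha; exact (ht b hb).symm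
      · rw [Set.mem_singleton_iff] at ha hb; subst ha; subst hb; rfl
    have hKle : K ≤ Subfield.closure s :=
      fun y hy => Subfield.subset_closure (Or.inl hy)
    have hmem : Subfield.closure s ∈ S := by
      refine ⟨?_, Subfield.closure_comm hcomm, fun r => hKle (hKalg r)⟩
      intro x hx
      induction hx using Subfield.closure_induction with
      | mem y hy =>
        rcases hy with hy | hy
        · exact hKle (hKσ y hy)
        · rw [Set.mem_singleton_iff] at hy; subst hy
          rw [hσt]; exact Subfield.subset_closure (Or.inr rfl)
      | one => rw [h1]; exact one_mem _
      | add a b _ _ ha hb => rw [hadd]; exact add_mem ha hb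
      | neg a _ ha => rw [hneg]; exact neg_mem ha
      | inv a _ ha => rw [hinvm]; exact inv_mem ha
      | mul a b _ _ ha hb => rw [hmul]; exact mul_mem hb ha
    exact hmax2 _ hmem hKle (Subfield.subset_closure (Or.inr rfl))
  -- Step 2: every element of C lies in K
  have step2 : ∀ x ∈ C, x ∈ K := by
    intro x hx
    have hsum : x + σ x ∈ C := by
      intro k hk
      rw [mul_add, add_mul, hx k hk, hCσ x hx k hk]
    have hsumfix : σ (x + σ x) = x + σ x := by
      rw [hadd, hinv, add_comm]
    have hsK : x + σ x ∈ K := step1 _ hsum hsumfix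
    -- the subfield generated by K and x
    set s : Set D := (K : Set D) ∪ {x} with hs
    have hcomm : ∀ a ∈ s, ∀ b ∈ s, a * b = b * a := by
      rintro a (ha | ha) b (hb | hb)
      · exact hKcomm a ha b hb
      · rw [Set.mem_singleton_iff] at hb; subst hb; exact hx a ha
      · rw [Set.mem_singleton_iff] at ha; subst ha; exact (hx b hb).symm
      · rw [Set.mem_singleton_iff] at ha hb; subst ha; subst hb; rfl
    have hKle : K ≤ Subfield.closure s :=
      fun y hy => Subfield.subset_closure (Or.inl hy)
    have hxcl : x ∈ Subfield.closure s := Subfield.subset_closure (Or.inr rfl)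
    have hσx_cl : σ x ∈ Subfield.closure s := by
      have : σ x = (x + σ x) - x := by rw [add_sub_cancel_left]
      rw [this]
      exact sub_mem (hKle hsK) hxcl
    have hmem : Subfield.closure s ∈ S := by
      refine ⟨?_, Subfield.closure_comm hcomm, fun r => hKle (hKalg r)⟩
      intro y hy
      induction hy using Subfield.closure_induction with
      | mem y hy =>
        rcases hy with hy | hy
        · exact hKle (hKσ y hy)
        · rw [Set.mem_singleton_iff] at hy; subst hy; exact hσx_cl
      | one => rw [h1]; exact one_mem _
      | add a b _ _ ha hb => rw [hadd]; exact add_mem ha hb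
      | neg a _ ha => rw [hneg]; exact neg_mem ha
      | inv a _ ha => rw [hinvm]; exact inv_mem ha
      | mul a b _ _ ha hb => rw [hmul]; exact mul_mem hb ha
    exact hmax2 _ hmem hKle hxcl
  refine ⟨K, hKσ, ?_⟩
  apply Set.Subset.antisymm
  · exact fun x hx => step2 x hx
  · intro k hk m hm
    exact hKcomm m hm k hk
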